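/- Let f be a morphism on {a,b}* with f(a) = uaav for some words u, v, where f is prolongable on a. For every sequence of positive integers k_1 > k_2 > … > k_t, the word f^{k_1}(ua) f^{k_2}(ua) ⋯ f^{k_t}(ua) f^{k_t}(a) is a prefix of f^{k_1+1}(a). -/

import Mathlib

/-- The extension of a substitution on letters to words. -/
def applyM {α : Type*} (g : α → List α) (w : List α) : List α := w.flatMap g

lemma applyM_append {α : Type*} (g : α → List α) (x y : List α) :
    applyM g (x ++ y) = applyM g x ++ applyM g y := by
  simp [applyM]

lemma applyM_iter_append {α : Type*} (g : α → List α) (n : ℕ) (x y : List α) :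
    (applyM g)^[n] (x ++ y) = (applyM g)^[n] x ++ (applyM g)^[n] y := by
  induction n generalizing x y with
  | zero => simp
  | succ n ih => simp [Function.iterate_succ_apply, applyM_append, ih]

lemma applyM_iter_prefix {α : Type*} (g : α → List α) (n : ℕ) {x y : List α}
    (h : x <+: y) : (applyM g)^[n] x <+: (applyM g)^[n] y := by
  obtain ⟨z, rfl⟩ := h
  rw [applyM_iter_append]
  exact ⟨_, rfl⟩

section main
variable (fm : Bool → List Bool)

lemma mono_lem (hprol : ∃ w : List Bool, w ≠ [] ∧ fm true = true :: w)
    {m n : ℕ} (h : m ≤ n) :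
    (applyM fm)^[m] [true] <+: (applyM fm)^[n] [true] := by
  obtain ⟨w, hw, hfm⟩ := hprol
  induction n with
  | zero => interval_cases m; exact List.prefix_rfl
  | succ n ih =>
    rcases Nat.eq_or_lt_of_le h with rfl | h'
    · exact List.prefix_rfl
    · refine (ih (by omega)).trans ?_
      rw [Function.iterate_succ_apply]
      apply applyM_iter_prefix
      show [true] <+: applyM fm [true]
      simp [applyM, hfm]

lemma key_lem (u v : List Bool) (hfa : fm true = u ++ [true, true] ++ v) (n : ℕ) :
    (applyM fm)^[n] (u ++ [true]) ++ (applyM fm)^[n] [true] <+: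
      (applyM fm)^[n + 1] [true] := by
  rw [Function.iterate_succ_apply]
  have : applyM fm [true] = (u ++ [true]) ++ ([true] ++ v) := by
    simp [applyM, hfa]
  rw [this]
  refine ⟨(applyM fm)^[n] v, ?_⟩
  rw [← applyM_iter_append, ← applyM_iter_append]
  congr 1
  simp

lemma main_lem (hprol : ∃ w : List Bool, w ≠ [] ∧ fm true = true :: w)
    (u v : List Bool) (hfa : fm true = u ++ [true, true] ++ v) :
    ∀ (L : List ℕ) (n : ℕ), List.Chain' (· > ·) (n :: L) →
    (((n :: L).map (fun m => (applyM fm)^[m] (u ++ [true]))).flatten ++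
      (applyM fm)^[(n :: L).getLast (by simp)] [true]) <+:
      (applyM fm)^[n + 1] [true] := by
  intro L
  induction L with
  | nil =>
    intro n _
    simpa using key_lem fm u v hfa n
  | cons m L ih =>
    intro n hc
    have hmn : m + 1 ≤ n := by
      have := List.isChain_cons_cons.mp hc
      omega
    have h1 := ih m (List.isChain_cons_cons.mp hc).2
    have h2 : (((m :: L).map (fun m => (applyM fm)^[m] (u ++ [true]))).flatten ++
        (applyM fm)^[(m :: L).getLast (by simp)] [true]) <+:
        (applyM fm)^[n] [true] := h1.trans (mono_lem fm hprol hmn)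
    have hgl : (n :: m :: L).getLast (by simp) = (m :: L).getLast (by simp) := by
      simp [List.getLast]
    rw [hgl]
    calc ((n :: m :: L).map (fun m => (applyM fm)^[m] (u ++ [true]))).flatten ++
          (applyM fm)^[(m :: L).getLast (by simp)] [true]
        = (applyM fm)^[n] (u ++ [true]) ++
          (((m :: L).map (fun m => (applyM fm)^[m] (u ++ [true]))).flatten ++
            (applyM fm)^[(m :: L).getLast (by simp)] [true]) := by
          simp
      _ <+: (applyM fm)^[n] (u ++ [true]) ++ (applyM fm)^[n] [true] := by
          obtain ⟨z, hz⟩ := h2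
          exact ⟨z, by rw [List.append_assoc, hz]⟩
      _ <+: (applyM fm)^[n + 1] [true] := key_lem fm u v hfa n

lemma main_lem' (hprol : ∃ w : List Bool, w ≠ [] ∧ fm true = true :: w)
    (u v : List Bool) (hfa : fm true = u ++ [true, true] ++ v)
    (M : List ℕ) (hM : M ≠ []) (hc : List.Chain' (· > ·) M) :
    ((M.map (fun m => (applyM fm)^[m] (u ++ [true]))).flatten ++
      (applyM fm)^[M.getLast hM] [true]) <+:
      (applyM fm)^[M.head hM + 1] [true] := by
  cases M with
  | nil => exact absurd rfl hM
  | cons n L => exact main_lem fm hprol u v hfa L n hc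

end main

/-- Letters: `a = true`, `b = false`. `f` is prolongable on `a` and
`f(a) = u·a·a·v`. -/
theorem stmt_12 (fm : Bool → List Bool)
    (hner : ∀ x, fm x ≠ [])
    (hprol : ∃ w : List Bool, w ≠ [] ∧ fm true = true :: w)
    (u v : List Bool) (hfa : fm true = u ++ [true, true] ++ v)
    (t : ℕ) (ht : 0 < t) (k : Fin t → ℕ)
    (hkpos : ∀ i, 0 < k i) (hanti : StrictAnti k) :
    ((List.ofFn (fun i : Fin t => (applyM fm)^[k i] (u ++ [true]))).flatten ++
        (applyM fm)^[k ⟨t - 1, by omega⟩] [true]) <+: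
      (applyM fm)^[k ⟨0, ht⟩ + 1] [true] := by
  have hL : List.ofFn k ≠ [] := by simp; omega
  have hchain : List.Chain' (· > ·) (List.ofFn k) := by
    rw [show List.Chain' (· > ·) (List.ofFn k) ↔ _ from List.isChain_iff_getElem]
    intro i hi
    simp only [List.getElem_ofFn, List.length_ofFn] at *
    exact hanti (by simp [Fin.lt_def])
  have h := main_lem' fm hprol u v hfa (List.ofFn k) hL hchain
  rw [List.map_ofFn, List.head_ofFn, List.getLast_ofFn] at h
  exact h
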